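/- Let H be a real Hilbert space and Γ0 : H → H a bounded symmetric linear operator (⟨Γ0 x, y⟩ = ⟨x, Γ0 y⟩ for all x, y ∈ H). Let u : ℝ → H be continuously differentiable with both u and u' square-integrable, i.e. ∫_ℝ ‖u(x)‖² dx < ∞ and ∫_ℝ ‖u'(x)‖² dx < ∞. Then ‖u‖_{L²(ℝ,H)} ≤ ‖Γ0 u' + u‖_{L²(ℝ,H)}. -/

import Mathlib

open MeasureTheory

set_option synthInstance.maxHeartbeats 400000
set_option maxHeartbeats 1000000

/-- **A priori energy estimate for the degenerate symmetric evolution equation.**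
For `Γ0` bounded symmetric and `u ∈ H¹(ℝ, H)` (here: `C¹` with `u, u'` square integrable),
one has `‖u‖_{L²} ≤ ‖Γ0 u' + u‖_{L²}`. -/
theorem energy_estimate
    {H : Type*} [NormedAddCommGroup H] [InnerProductSpace ℝ H] [CompleteSpace H]
    (Γ0 : H →L[ℝ] H) (hΓ0 : ∀ x y : H, (inner ℝ (Γ0 x) y : ℝ) = inner ℝ x (Γ0 y))
    (u : ℝ → H) (hu : ContDiff ℝ 1 u)
    (hu2 : Integrable (fun x : ℝ => ‖u x‖ ^ 2))
    (hu'2 : Integrable (fun x : ℝ => ‖deriv u x‖ ^ 2)) :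
    Real.sqrt (∫ x : ℝ, ‖u x‖ ^ 2) ≤
      Real.sqrt (∫ x : ℝ, ‖Γ0 (deriv u x) + u x‖ ^ 2) := by
  have hud : Differentiable ℝ u := hu.differentiable one_ne_zero
  have hu' : Continuous (deriv u) := hu.continuous_deriv le_rfl
  have huc : Continuous u := hu.continuous
  set G : ℝ → H := fun x => Γ0 (deriv u x) + u x with hG
  have hGc : Continuous G := ((Γ0.continuous.comp hu').add huc)
  -- integrability of ‖G‖²
  have hG2 : Integrable (fun x : ℝ => ‖G x‖ ^ 2) := by
    refine Integrable.mono' ((hu'2.const_mul (2 * ‖Γ0‖ ^ 2)).add (hu2.const_mul 2))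
      ((hGc.norm.pow 2).aestronglyMeasurable) ?_
    filter_upwards with x
    have h1 : ‖G x‖ ≤ ‖Γ0‖ * ‖deriv u x‖ + ‖u x‖ := by
      refine (norm_add_le _ _).trans ?_
      exact add_le_add (Γ0.le_opNorm _) le_rfl
    have h2 : ‖G x‖ ^ 2 ≤ (‖Γ0‖ * ‖deriv u x‖ + ‖u x‖) ^ 2 :=
      pow_le_pow_left₀ (norm_nonneg _) h1 2
    rw [Real.norm_of_nonneg (by positivity)]
    simp only [Pi.add_apply]
    nlinarith [sq_nonneg (‖Γ0‖ * ‖deriv u x‖ - ‖u x‖), norm_nonneg (u x),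
      norm_nonneg (deriv u x), norm_nonneg Γ0, sq_nonneg ‖Γ0‖]
  -- the key cross term
  set h : ℝ → ℝ := fun x => (inner ℝ (u x) (Γ0 (deriv u x)) : ℝ) with hh
  have hhc : Continuous h := huc.inner (Γ0.continuous.comp hu')
  have hhint : Integrable h := by
    refine Integrable.mono' ((hu2.add hu'2).const_mul (‖Γ0‖ / 2 + 1))
      hhc.aestronglyMeasurable ?_
    filter_upwards with x
    have h1 : |h x| ≤ ‖u x‖ * (‖Γ0‖ * ‖deriv u x‖) := by
      refine (abs_real_inner_le_norm _ _).trans ?_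
      exact mul_le_mul_of_nonneg_left (Γ0.le_opNorm _) (norm_nonneg _)
    rw [Real.norm_eq_abs]
    simp only [Pi.add_apply]
    nlinarith [sq_nonneg (‖u x‖ - ‖deriv u x‖), norm_nonneg (u x),
      norm_nonneg (deriv u x), norm_nonneg Γ0, sq_nonneg (‖u x‖ + ‖deriv u x‖)]
  -- f = ⟪u, Γ0 u⟫, f' = 2 h
  have hf : ∀ x : ℝ, HasDerivAt (fun t => (inner ℝ (u t) (Γ0 (u t)) : ℝ)) (2 * h x) x := by
    intro x
    have h1 : HasDerivAt u (deriv u x) x := (hud x).hasDerivAt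
    have h2 : HasDerivAt (fun t => Γ0 (u t)) (Γ0 (deriv u x)) x := Γ0.hasFDerivAt.comp_hasDerivAt x h1
    have := h1.inner ℝ h2
    refine this.congr_deriv ?_
    have : (inner ℝ (deriv u x) (Γ0 (u x)) : ℝ) = inner ℝ (u x) (Γ0 (deriv u x)) := by
      rw [real_inner_comm, hΓ0]
    rw [this]; ring
  have hfint : Integrable (fun x : ℝ => (inner ℝ (u x) (Γ0 (u x)) : ℝ)) := by
    refine Integrable.mono' (hu2.const_mul ‖Γ0‖)
      (huc.inner (Γ0.continuous.comp huc)).aestronglyMeasurable ?_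
    filter_upwards with x
    rw [Real.norm_eq_abs]
    refine (abs_real_inner_le_norm _ _).trans ?_
    calc ‖u x‖ * ‖Γ0 (u x)‖ ≤ ‖u x‖ * (‖Γ0‖ * ‖u x‖) :=
          mul_le_mul_of_nonneg_left (Γ0.le_opNorm _) (norm_nonneg _)
      _ = ‖Γ0‖ * ‖u x‖ ^ 2 := by ring
  have hkey : ∫ x : ℝ, h x = 0 := by
    have := integral_eq_zero_of_hasDerivAt_of_integrable hf
      (by simpa using hhint.const_mul 2) hfint
    have h2 : ∫ x : ℝ, 2 * h x = 2 * ∫ x : ℝ, h x := integral_const_mul 2 h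
    rw [h2] at this
    linarith
  -- ∫ ⟪u, G⟫ = ∫ ‖u‖²
  have hinner : ∀ x, (inner ℝ (u x) (G x) : ℝ) = h x + ‖u x‖ ^ 2 := by
    intro x
    rw [hG, inner_add_right, real_inner_self_eq_norm_sq]
  have hIuG : ∫ x : ℝ, (inner ℝ (u x) (G x) : ℝ) = ∫ x : ℝ, ‖u x‖ ^ 2 := by
    simp_rw [hinner]
    rw [integral_add hhint hu2, hkey, zero_add]
  -- Memℒp facts
  have hmu : MemLp u 2 (volume : Measure ℝ) :=
    (memLp_two_iff_integrable_sq_norm huc.aestronglyMeasurable).2 hu2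
  have hmG : MemLp G 2 (volume : Measure ℝ) :=
    (memLp_two_iff_integrable_sq_norm hGc.aestronglyMeasurable).2 hG2
  have hp2 : ((2 : ENNReal)) = ENNReal.ofReal (2 : ℝ) := by
    rw [ENNReal.ofReal_ofNat]
  have hCS : ∫ x : ℝ, ‖u x‖ * ‖G x‖ ≤
      (∫ x : ℝ, ‖u x‖ ^ (2:ℝ)) ^ ((1:ℝ)/2) * (∫ x : ℝ, ‖G x‖ ^ (2:ℝ)) ^ ((1:ℝ)/2) := by
    refine integral_mul_norm_le_Lp_mul_Lq (Real.holderConjugate_iff.mpr ⟨one_lt_two, by norm_num⟩ : Real.HolderConjugate 2 2) ?_ ?_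
    · rwa [← hp2]
    · rwa [← hp2]
  -- assemble
  have hInn_le : ∫ x : ℝ, ‖u x‖ ^ 2 ≤ ∫ x : ℝ, ‖u x‖ * ‖G x‖ := by
    rw [← hIuG]
    refine integral_mono ?_ ?_ ?_
    · have : Integrable (fun x : ℝ => h x + ‖u x‖ ^ 2) := hhint.add hu2
      simpa [hinner] using this
    · refine Integrable.mono' ((hu2.add hG2).const_mul (1/2))
        ((huc.norm.mul hGc.norm).aestronglyMeasurable) ?_
      filter_upwards with x
      rw [Real.norm_of_nonneg (by positivity)]
      simp only [Pi.add_apply]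
      nlinarith [sq_nonneg (‖u x‖ - ‖G x‖)]
    · intro x
      exact real_inner_le_norm _ _
  have hA : (0:ℝ) ≤ ∫ x : ℝ, ‖u x‖ ^ 2 := integral_nonneg fun x => by positivity
  have hB : (0:ℝ) ≤ ∫ x : ℝ, ‖G x‖ ^ 2 := integral_nonneg fun x => by positivity
  set A := Real.sqrt (∫ x : ℝ, ‖u x‖ ^ 2) with hAdef
  set B := Real.sqrt (∫ x : ℝ, ‖G x‖ ^ 2) with hBdef
  have hA2 : A ^ 2 = ∫ x : ℝ, ‖u x‖ ^ 2 := Real.sq_sqrt hA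
  have hB2 : B ^ 2 = ∫ x : ℝ, ‖G x‖ ^ 2 := Real.sq_sqrt hB
  simp_rw [show (2:ℝ) = ((2:ℕ):ℝ) by norm_num, Real.rpow_natCast] at hCS
  push_cast at hCS
  rw [← Real.sqrt_eq_rpow, ← Real.sqrt_eq_rpow, ← hAdef, ← hBdef] at hCS
  have hfin : A ^ 2 ≤ A * B := by
    rw [hA2]; exact hInn_le.trans hCS
  have hBnn : 0 ≤ B := Real.sqrt_nonneg _
  rcases le_or_gt A 0 with h0 | h0
  · exact h0.trans hBnn
  · nlinarith
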